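/- arXiv:1903.03488 — 3 statements merged into one kernel-verified Lean document; each statement's English description precedes it below -/
import Mathlib

section
/- For every ε > 0 and dimension d, there exists a function f : ℝ^d → ℝ^d computable by a ReLU network with two hidden layers of width 3d, such that f(x) = x for all x ∈ [0,1]^d, and f(x) = 0 for all x with dist(x, [0,1]^d) > ε. -/
/-- Coordinatewise ReLU. -/
def relu {n : ℕ} (v : Fin n → ℝ) : Fin n → ℝ := fun i => max (v i) 0

open Matrix
namespace ReluBox

variable (d : ℕ)

noncomputable def P (x : Fin d → ℝ) : ℝ := ∑ j, (max (-x j) 0 + max (x j - 1) 0)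

noncomputable def W1 : Matrix (Fin (3*d)) (Fin d) ℝ := fun i j =>
  if (i:ℕ) < d then (if (j:ℕ) = (i:ℕ) then 1 else 0)
  else if (i:ℕ) < 2*d then (if (j:ℕ) = (i:ℕ) - d then -1 else 0)
  else (if (j:ℕ) = (i:ℕ) - 2*d then 1 else 0)

noncomputable def b1 : Fin (3*d) → ℝ := fun i => if (i:ℕ) < 2*d then 0 else -1

noncomputable def W2 (N : ℝ) : Matrix (Fin (3*d)) (Fin (3*d)) ℝ := fun i j =>
  (if (i:ℕ) < d ∧ j = i then 1 else 0) + (if (i:ℕ) < d ∧ d ≤ (j:ℕ) then -N else 0)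

noncomputable def W3 : Matrix (Fin d) (Fin (3*d)) ℝ := fun i j =>
  if (j:ℕ) = (i:ℕ) then 1 else 0

noncomputable def H (x : Fin d → ℝ) : Fin (3*d) → ℝ := fun j =>
  if h : (j:ℕ) < d then max (x ⟨j, h⟩) 0
  else if h2 : (j:ℕ) < 2*d then max (-x ⟨(j:ℕ) - d, by omega⟩) 0
  else max (x ⟨(j:ℕ) - 2*d, by omega⟩ - 1) 0

lemma sum_delta {m : ℕ} (hm : m < d) (c : ℝ) (x : Fin d → ℝ) :
    ∑ k : Fin d, (if (k:ℕ) = m then c else 0) * x k = c * x ⟨m, hm⟩ := by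
  have h : ∀ k : Fin d, ((k:ℕ) = m) = (k = ⟨m, hm⟩) := by
    intro k; simp [Fin.ext_iff]
  simp [h, ite_mul, Finset.sum_ite_eq']

lemma layer1 (x : Fin d → ℝ) : relu (W1 d *ᵥ x + b1 d) = H d x := by
  funext j
  simp only [relu, Matrix.mulVec, dotProduct, W1, b1, H, Pi.add_apply]
  rcases lt_or_ge (j:ℕ) d with h | h
  · rw [dif_pos h]
    have : (j:ℕ) < 2*d := by omega
    simp only [if_pos h, if_pos this, sum_delta d h, one_mul, add_zero]
  · rw [dif_neg (by omega)]
    rcases lt_or_ge (j:ℕ) (2*d) with h2 | h2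
    · rw [dif_pos h2]
      have hm : (j:ℕ) - d < d := by omega
      simp only [if_neg (by omega : ¬ (j:ℕ) < d), if_pos h2, sum_delta d hm, add_zero]
      ring_nf
    · rw [dif_neg (by omega)]
      have hm : (j:ℕ) - 2*d < d := by omega
      simp only [if_neg (by omega : ¬ (j:ℕ) < d), if_neg (by omega : ¬ (j:ℕ) < 2*d),
        sum_delta d hm, one_mul]
      ring_nf

lemma sumH (x : Fin d → ℝ) :
    ∑ j : Fin (3*d), (if d ≤ (j:ℕ) then H d x j else 0) = P d x := by
  have h3 : d + (d + d) = 3*d := by ring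
  rw [← Fintype.sum_equiv (finCongr h3)
      (fun k => if d ≤ ((finCongr h3 k : Fin (3*d)):ℕ) then H d x (finCongr h3 k) else 0)
      (fun j => if d ≤ (j:ℕ) then H d x j else 0) (fun k => rfl)]
  rw [Fin.sum_univ_add, Fin.sum_univ_add]
  have s1 : ∀ k : Fin d,
      (if d ≤ ((finCongr h3 (Fin.castAdd (d+d) k) : Fin (3*d)):ℕ) then
        H d x (finCongr h3 (Fin.castAdd (d+d) k)) else 0) = 0 := by
    intro k
    rw [if_neg]
    simp only [finCongr_apply, Fin.coe_cast, Fin.coe_castAdd]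
    omega
  have s2 : ∀ k : Fin d,
      (if d ≤ ((finCongr h3 (Fin.natAdd d (Fin.castAdd d k)) : Fin (3*d)):ℕ) then
        H d x (finCongr h3 (Fin.natAdd d (Fin.castAdd d k))) else 0) = max (-x k) 0 := by
    intro k
    have hv : ((finCongr h3 (Fin.natAdd d (Fin.castAdd d k)) : Fin (3*d)):ℕ) = d + (k:ℕ) := by
      simp
    rw [if_pos (by omega)]
    rw [H]
    rw [dif_neg (by omega), dif_pos (by rw [hv]; omega)]
    simp only [hv, add_tsub_cancel_left, Fin.eta]
  have s3 : ∀ k : Fin d,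
      (if d ≤ ((finCongr h3 (Fin.natAdd d (Fin.natAdd d k)) : Fin (3*d)):ℕ) then
        H d x (finCongr h3 (Fin.natAdd d (Fin.natAdd d k))) else 0) = max (x k - 1) 0 := by
    intro k
    have hv : ((finCongr h3 (Fin.natAdd d (Fin.natAdd d k)) : Fin (3*d)):ℕ) = d + (d + (k:ℕ)) := by
      simp; omega
    have hsub : d + (d + (k:ℕ)) - 2*d = (k:ℕ) := by omega
    rw [if_pos (by omega)]
    rw [H]
    rw [dif_neg (by omega), dif_neg (by rw [hv]; omega)]
    simp only [hv, hsub, Fin.eta]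
  rw [Finset.sum_congr rfl (fun k _ => s1 k), Finset.sum_congr rfl (fun k _ => s2 k),
    Finset.sum_congr rfl (fun k _ => s3 k)]
  simp [P, Finset.sum_add_distrib]

lemma layer2 (N : ℝ) (x : Fin d → ℝ) (j : Fin (3*d)) :
    (W2 d N *ᵥ H d x) j = if h : (j:ℕ) < d then H d x j - N * P d x else 0 := by
  simp only [Matrix.mulVec, dotProduct, W2, add_mul]
  rw [Finset.sum_add_distrib]
  have e1 : ∀ k : Fin (3*d), (if (j:ℕ) < d ∧ k = j then (1:ℝ) else 0) * H d x k
      = if k = j then (if (j:ℕ) < d then H d x k else 0) else 0 := by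
    intro k
    by_cases h1 : k = j <;> by_cases h2 : (j:ℕ) < d <;> simp [h1, h2]
  have e2 : ∀ k : Fin (3*d), (if (j:ℕ) < d ∧ d ≤ (k:ℕ) then -N else 0) * H d x k
      = if (j:ℕ) < d then -N * (if d ≤ (k:ℕ) then H d x k else 0) else 0 := by
    intro k
    by_cases h1 : (j:ℕ) < d <;> by_cases h2 : d ≤ (k:ℕ) <;> simp [h1, h2]
  rw [Finset.sum_congr rfl (fun k _ => e1 k), Finset.sum_congr rfl (fun k _ => e2 k),
    Finset.sum_ite_eq' Finset.univ j]
  by_cases h : (j:ℕ) < d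
  · rw [dif_pos h]
    simp only [h, if_true, Finset.mem_univ, ← Finset.mul_sum, sumH]
    ring
  · rw [dif_neg h]
    simp [h]

lemma net_eval (N : ℝ) (x : Fin d → ℝ) (i : Fin d) :
    (W3 d *ᵥ relu (W2 d N *ᵥ relu (W1 d *ᵥ x + b1 d) + 0) + 0) i
      = max (max (x i) 0 - N * P d x) 0 := by
  have hid : (i:ℕ) < 3*d := by have := i.2; omega
  rw [layer1]
  simp only [Pi.add_apply, Pi.zero_apply, add_zero, Matrix.mulVec, dotProduct, W3]
  rw [sum_delta (3*d) hid 1 (relu (W2 d N *ᵥ H d x))]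
  rw [one_mul, relu]
  rw [layer2]
  rw [dif_pos (by simpa using i.2)]
  congr 2
  rw [H, dif_pos (by simpa using i.2)]


lemma sqrt_sum_sq_le (a : Fin d → ℝ) : Real.sqrt (∑ i, a i ^ 2) ≤ ∑ i, |a i| := by
  have hs : (0:ℝ) ≤ ∑ i, |a i| := Finset.sum_nonneg fun i _ => abs_nonneg _
  rw [show ∑ i, |a i| = Real.sqrt ((∑ i, |a i|)^2) by rw [Real.sqrt_sq hs]]
  apply Real.sqrt_le_sqrt
  calc ∑ i, a i ^ 2 = ∑ i, |a i| * |a i| := by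
        refine Finset.sum_congr rfl fun i _ => ?_
        rw [← sq_abs, sq]
    _ ≤ ∑ i, |a i| * (∑ j, |a j|) := by
        refine Finset.sum_le_sum fun i _ => ?_
        exact mul_le_mul_of_nonneg_left
          (Finset.single_le_sum (fun j _ => abs_nonneg (a j)) (Finset.mem_univ i)) (abs_nonneg _)
    _ = (∑ i, |a i|)^2 := by rw [← Finset.sum_mul, sq]

lemma infDist_le_P (x : EuclideanSpace ℝ (Fin d)) :
    Metric.infDist x {y : EuclideanSpace ℝ (Fin d) | ∀ i, y i ∈ Set.Icc (0:ℝ) 1}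
      ≤ P d (fun j => x j) := by
  set y : EuclideanSpace ℝ (Fin d) := WithLp.toLp 2 (fun i => min (max (x i) 0) 1) with hy
  have hmem : y ∈ {y : EuclideanSpace ℝ (Fin d) | ∀ i, y i ∈ Set.Icc (0:ℝ) 1} := by
    intro i
    constructor
    · exact le_min (le_max_right _ _) zero_le_one
    · exact min_le_right _ _
  refine le_trans (Metric.infDist_le_dist_of_mem hmem) ?_
  rw [EuclideanSpace.dist_eq]
  have habs : ∀ i, |x i - y i| = max (-x i) 0 + max (x i - 1) 0 := by
    intro i
    rcases le_or_gt (x i) 0 with h | h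
    · rw [hy]
      simp only [WithLp.ofLp_toLp]
      rw [max_eq_right h, min_eq_left (by linarith), max_eq_left (by linarith),
        max_eq_right (by linarith)]
      rw [abs_of_nonpos (by linarith)]
      ring
    · rcases le_or_gt (x i) 1 with h1 | h1
      · rw [hy]; simp only [WithLp.ofLp_toLp]
        rw [max_eq_left h.le, min_eq_left h1, max_eq_right (by linarith),
          max_eq_right (by linarith)]
        simp
      · rw [hy]; simp only [WithLp.ofLp_toLp]
        rw [max_eq_left (by linarith), min_eq_right (by linarith),
          max_eq_right (by linarith), max_eq_left (by linarith)]
        rw [abs_of_nonneg (by linarith)]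
        ring
  calc Real.sqrt (∑ i, dist (x i) (y i) ^ 2) = Real.sqrt (∑ i, (x i - y i) ^ 2) := by
        congr 1; exact Finset.sum_congr rfl fun i _ => by rw [Real.dist_eq, sq_abs]
    _ ≤ ∑ i, |x i - y i| := sqrt_sum_sq_le d _
    _ = P d (fun j => x j) := by
        rw [P]; exact Finset.sum_congr rfl fun i _ => habs i


end ReluBox

open ReluBox in
/-- For every ε > 0 there is a two-hidden-layer ReLU network of width 3d
computing f : ℝ^d → ℝ^d with f = id on [0,1]^d and f = 0 at Euclidean distance > ε
from [0,1]^d. -/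
theorem exists_relu_box_identity
    (d : ℕ) (ε : ℝ) (hε : 0 < ε) :
    ∃ (f : EuclideanSpace ℝ (Fin d) → EuclideanSpace ℝ (Fin d))
      (W1 : Matrix (Fin (3 * d)) (Fin d) ℝ) (b1 : Fin (3 * d) → ℝ)
      (W2 : Matrix (Fin (3 * d)) (Fin (3 * d)) ℝ) (b2 : Fin (3 * d) → ℝ)
      (W3 : Matrix (Fin d) (Fin (3 * d)) ℝ) (b3 : Fin d → ℝ),
      (∀ x : EuclideanSpace ℝ (Fin d),
        f x = (W3.mulVec (relu (W2.mulVec (relu (W1.mulVec (fun j => x j) + b1)) + b2)) + b3 :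
          Fin d → ℝ)) ∧
      (∀ x : EuclideanSpace ℝ (Fin d), (∀ i, x i ∈ Set.Icc (0 : ℝ) 1) → f x = x) ∧
      (∀ x : EuclideanSpace ℝ (Fin d),
        Metric.infDist x {y : EuclideanSpace ℝ (Fin d) | ∀ i, y i ∈ Set.Icc (0 : ℝ) 1} > ε →
        f x = 0) := by
  obtain ⟨N, hN⟩ : ∃ N : ℝ, N = 1 + 1/ε := ⟨_, rfl⟩
  refine ⟨fun x => WithLp.toLp 2 (Matrix.mulVec (W3 d) (relu (Matrix.mulVec (W2 d N)
      (relu (Matrix.mulVec (W1 d) (fun j => x j) + b1 d)) + 0)) + 0 : Fin d → ℝ),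
    W1 d, b1 d, W2 d N, 0, W3 d, 0, fun x => rfl, ?_, ?_⟩
  · intro x hx
    apply PiLp.ext; intro i
    have := net_eval d N (fun j => x j) i
    beta_reduce
    simp only [WithLp.ofLp_toLp]
    rw [this]
    have hP : P d (fun j => x j) = 0 := by
      rw [P]
      refine Finset.sum_eq_zero fun j _ => ?_
      have h1 := (hx j).1
      have h2 := (hx j).2
      rw [max_eq_right (by linarith), max_eq_right (by linarith)]
      ring
    rw [hP, mul_zero, sub_zero, max_eq_left (hx i).1, max_eq_left (hx i).1]
  · intro x hx
    have hP : ε < P d (fun j => x j) := lt_of_lt_of_le hx (infDist_le_P d x)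
    have hP0 : (0:ℝ) < P d (fun j => x j) := lt_trans hε hP
    apply PiLp.ext; intro i
    have := net_eval d N (fun j => x j) i
    beta_reduce
    simp only [WithLp.ofLp_toLp]
    rw [this]
    have key : max (x i) 0 - N * P d (fun j => x j) ≤ 0 := by
      have h1 : max (x i) 0 ≤ 1 + max (x i - 1) 0 := by
        rcases le_or_gt (x i) 1 with h | h
        · rw [max_eq_right (by linarith : x i - 1 ≤ 0), add_zero]
          exact max_le h zero_le_one
        · rw [max_eq_left (by linarith : (0:ℝ) ≤ x i - 1), max_eq_left (by linarith)]
          linarith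
      have h2 : max (x i - 1) 0 ≤ P d (fun j => x j) := by
        rw [P]
        refine le_trans ?_ (Finset.single_le_sum (f := fun j => max (-x j) 0 + max (x j - 1) 0)
          (fun j _ => by positivity) (Finset.mem_univ i))
        beta_reduce
        have : (0:ℝ) ≤ max (-x i) 0 := le_max_right _ _
        linarith
      have h3 : 1 < P d (fun j => x j) / ε := (one_lt_div hε).2 hP
      have h4 : N * P d (fun j => x j) = P d (fun j => x j) + P d (fun j => x j) / ε := by
        rw [hN]; field_simp
      linarith [h1, h2, h3, h4]
    rw [max_eq_right key]
    rfl
end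

section
/- Let f : ℝ^d → ℝ be a function whose domain is partitioned into fewer than r^n convex regions, on each of which f is affine. Let K_n = ⋃_{i ∈ [r]^n} F_i(K_0) where the sets F_i(K_0) are pairwise at positive distance and each has nonempty interior (contains an interior point at distance γ > 0 from its boundary). Then f cannot satisfy sign(f) = +1 on ⋃_i (F_i(K_0))^γ and sign(f) = −1 on the complement of K_n. Consequently any ReLU network of depth t and width k with (ek/d)^{td} < r^n fails to separate K_n^γ from ℝ^d \ K_n. -/
set_option maxHeartbeats 1000000


/-- A function f : ℝ^d → ℝ that is affine on each region of a partition of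
ℝ^d into fewer than r^n convex regions cannot be positive on the γ-interiors of the r^n
pairwise-separated pieces F_i(K_0) of K_n and negative outside K_n. -/
theorem no_shallow_separation
    (d r n N : ℕ) (hN : N < r ^ n)
    (f : EuclideanSpace ℝ (Fin d) → ℝ)
    (R : Fin N → Set (EuclideanSpace ℝ (Fin d)))
    (hcover : (⋃ j, R j) = Set.univ)
    (hconv : ∀ j, Convex ℝ (R j))
    (haffine : ∀ j, ∃ (L : EuclideanSpace ℝ (Fin d) →ₗ[ℝ] ℝ) (c : ℝ),
      ∀ x ∈ R j, f x = L x + c)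
    (A : (Fin n → Fin r) → Set (EuclideanSpace ℝ (Fin d)))
    (hsep : ∀ i j, i ≠ j → ∃ ε > 0, ∀ a ∈ A i, ∀ b ∈ A j, ε ≤ dist a b)
    (γ : ℝ) (hγ : 0 < γ)
    (hnonempty : ∀ i, {x | Metric.closedBall x γ ⊆ A i}.Nonempty) :
    ¬ ((∀ i, ∀ x ∈ {x | Metric.closedBall x γ ⊆ A i}, 0 ≤ f x) ∧
       (∀ x, x ∉ ⋃ i, A i → f x < 0)) := by
  rintro ⟨hpos, hneg⟩
  choose x hx using hnonempty
  have hxA : ∀ i, x i ∈ A i := fun i => hx i (Metric.mem_closedBall_self hγ.le)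
  -- each chosen point lies in some region
  have hmem : ∀ i, ∃ k, x i ∈ R k := by
    intro i
    have : x i ∈ ⋃ k, R k := hcover ▸ Set.mem_univ (x i)
    exact Set.mem_iUnion.mp this
  choose g hg using hmem
  -- pigeonhole
  obtain ⟨i, j, hij, hgij⟩ := Fintype.exists_ne_map_eq_of_card_lt g
    (by simpa [Fintype.card_fun] using hN)
  set a := x i with ha_def
  set b := x j with hb_def
  have ha : a ∈ R (g i) := hg i
  have hb : b ∈ R (g i) := hgij ▸ hg j
  obtain ⟨ε₀, hε₀, hdist₀⟩ := hsep i j hij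
  have hdab : ε₀ ≤ dist a b := hdist₀ a (hxA i) b (hxA j)
  have hd0 : 0 < ‖b - a‖ := by
    rw [← dist_eq_norm, dist_comm]; linarith
  set d0 := ‖b - a‖ with hd0_def
  -- a uniform separation from A i
  obtain ⟨εm, hεm_pos, hεm⟩ :
      ∃ εm > 0, ∀ k, k ≠ i → ∀ u ∈ A i, ∀ v ∈ A k, εm ≤ dist u v := by
    have h' : ∀ k : (Fin n → Fin r),
        ∃ e, 0 < e ∧ (k ≠ i → ∀ u ∈ A i, ∀ v ∈ A k, e ≤ dist u v) := by
      intro k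
      by_cases h : k = i
      · exact ⟨1, one_pos, fun hk => absurd h hk⟩
      · obtain ⟨e, he, hd⟩ := hsep i k (Ne.symm h)
        exact ⟨e, he, fun _ => hd⟩
    choose e he hd using h'
    refine ⟨Finset.univ.inf' ⟨i, Finset.mem_univ i⟩ e, ?_, ?_⟩
    · exact (Finset.lt_inf'_iff ⟨i, Finset.mem_univ i⟩).mpr fun k _ => he k
    · intro k hk u hu v hv
      exact le_trans (Finset.inf'_le _ (Finset.mem_univ k)) (hd k hk u hu v hv)
  set T : Set ℝ := {t | t ∈ Set.Icc (0:ℝ) 1 ∧ a + t • (b - a) ∈ A i} with hT_def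
  have hT0 : (0:ℝ) ∈ T := by
    refine ⟨⟨le_refl 0, zero_le_one⟩, ?_⟩
    simpa using hxA i
  have hTbdd : BddAbove T := ⟨1, fun t ht => ht.1.2⟩
  set s := sSup T with hs_def
  have hs0 : 0 ≤ s := le_csSup hTbdd hT0
  have hs_ub : s ≤ 1 - ε₀ / d0 := by
    apply csSup_le ⟨0, hT0⟩
    intro t ht
    have ht1 : t ≤ 1 := ht.1.2
    have hdt : ε₀ ≤ dist (a + t • (b - a)) b := hdist₀ _ ht.2 b (hxA j)
    have : dist (a + t • (b - a)) b = (1 - t) * d0 := by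
      rw [dist_eq_norm]
      have : a + t • (b - a) - b = (1 - t) • (a - b) := by module
      rw [this, norm_smul, Real.norm_eq_abs, abs_of_nonneg (by linarith)]
      rw [show a - b = -(b - a) by abel, norm_neg]
    rw [this] at hdt
    have h5 : ε₀ / d0 ≤ 1 - t := (div_le_iff₀ hd0).mpr (by linarith)
    linarith
  have hs1 : s < 1 := by
    have : 0 < ε₀ / d0 := div_pos hε₀ hd0
    linarith
  set δ := min (1 - s) (εm / (4 * d0)) with hδ_def
  have hδ : 0 < δ := lt_min (by linarith) (div_pos hεm_pos (by linarith))
  set t' := s + δ with ht'_def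
  have ht'1 : t' ≤ 1 := by
    have := min_le_left (1 - s) (εm / (4 * d0)); simp only [ht'_def]; linarith
  have ht'0 : 0 ≤ t' := by linarith
  obtain ⟨t, htT, htgt⟩ := exists_lt_of_lt_csSup ⟨0, hT0⟩ (show s - δ < s by linarith)
  have hts : t ≤ s := le_csSup hTbdd htT
  set y := a + t' • (b - a) with hy_def
  set z := a + t • (b - a) with hz_def
  have hzAi : z ∈ A i := htT.2
  have hdistyz : dist y z < εm := by
    have : dist y z = (t' - t) * d0 := by
      rw [dist_eq_norm]
      have : y - z = (t' - t) • (b - a) := by rw [hy_def, hz_def]; module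
      rw [this, norm_smul, Real.norm_eq_abs, abs_of_nonneg (by linarith)]
    rw [this]
    have h1 : t' - t < 2 * δ := by linarith
    have h2 : δ ≤ εm / (4 * d0) := min_le_right _ _
    have h3 : (t' - t) * d0 < 2 * δ * d0 := by nlinarith
    have h4 : 2 * δ * d0 ≤ εm / 2 := by
      rw [le_div_iff₀ (show (0:ℝ) < 4 * d0 by linarith)] at h2
      nlinarith
    linarith
  have hyAi : y ∉ A i := by
    intro hy
    have : t' ∈ T := ⟨⟨ht'0, ht'1⟩, hy⟩
    have := le_csSup hTbdd this
    simp only [ht'_def] at this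
    linarith
  have hynot : y ∉ ⋃ k, A k := by
    rw [Set.mem_iUnion]
    rintro ⟨k, hk⟩
    by_cases h : k = i
    · exact hyAi (h ▸ hk)
    · have := hεm k h z hzAi y hk
      rw [dist_comm] at this
      linarith
  have hfy : f y < 0 := hneg y hynot
  -- affine nonnegativity on the segment
  obtain ⟨L, c, hL⟩ := haffine (g i)
  have hyR : y ∈ R (g i) := by
    have heq : y = (1 - t') • a + t' • b := by rw [hy_def]; module
    rw [heq]
    exact hconv (g i) ha hb (by linarith) ht'0 (by ring)
  have hfa : 0 ≤ f a := hpos i a (hx i)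
  have hfb : 0 ≤ f b := hpos j b (hx j)
  have hfaL : f a = L a + c := hL a ha
  have hfbL : f b = L b + c := hL b hb
  have hfyL : f y = L y + c := hL y hyR
  have hLy : L y = (1 - t') * L a + t' * L b := by
    have heq : y = (1 - t') • a + t' • b := by rw [hy_def]; module
    rw [heq, map_add, map_smul, map_smul]
    simp [smul_eq_mul]
  have : 0 ≤ f y := by
    rw [hfyL, hLy]
    have h1 : 0 ≤ (1 - t') * (L a + c) := mul_nonneg (by linarith) (by linarith [hfaL ▸ hfa])
    have h2 : 0 ≤ t' * (L b + c) := mul_nonneg ht'0 (by linarith [hfbL ▸ hfb])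
    nlinarith
  linarith
end

section
/- Let w ∈ ℝ^s be drawn uniformly from [−1/(2s), 1/(2s)]^s, let z ∈ ℝ^s satisfy ‖z‖_∞ > b for some b > 0 in at least one coordinate (i.e., there is ℓ with |z_ℓ| > b), and fix a threshold τ > 0. Then P[|wᵀz + b| ≤ τ] ≤ 2sτ/b. -/
open MeasureTheory

/-- For w uniform on [-1/(2s), 1/(2s)]^s, z with some coordinate of
absolute value more than b > 0, and τ > 0, the probability that |wᵀz + b| ≤ τ is at
most 2sτ/b (stated via Lebesgue measure on the cube). -/
theorem anticoncentration_uniform_weights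
    (s : ℕ) (hs : 0 < s) (z : Fin s → ℝ) (b τ : ℝ)
    (hb : 0 < b) (hτ : 0 < τ)
    (hz : ∃ ℓ, b < |z ℓ|) :
    volume {w : Fin s → ℝ |
        (∀ i, w i ∈ Set.Icc (-(1 / (2 * s)) : ℝ) (1 / (2 * s))) ∧
        |(∑ i, w i * z i) + b| ≤ τ}
      ≤ ENNReal.ofReal (2 * s * τ / b) *
        volume {w : Fin s → ℝ | ∀ i, w i ∈ Set.Icc (-(1 / (2 * s)) : ℝ) (1 / (2 * s))} := by
  obtain ⟨n, rfl⟩ : ∃ n, s = n + 1 := ⟨s - 1, by omega⟩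
  obtain ⟨ℓ, hℓ⟩ := hz
  have hzℓ : z ℓ ≠ 0 := by
    intro h; rw [h, abs_zero] at hℓ; linarith
  set c : ℝ := 1 / (2 * ((n + 1 : ℕ) : ℝ)) with hc
  set S : Set (Fin (n + 1) → ℝ) := {w |
      (∀ i, w i ∈ Set.Icc (-c) c) ∧ |(∑ i, w i * z i) + b| ≤ τ} with hSdef
  set Cube : Set (Fin (n + 1) → ℝ) := {w | ∀ i, w i ∈ Set.Icc (-c) c} with hCube
  set Cube' : Set (Fin n → ℝ) := {y | ∀ j, y j ∈ Set.Icc (-c) c} with hCube'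
  have hCubeEq : Cube = Set.pi Set.univ fun _ => Set.Icc (-c) c := by
    ext w; simp only [hCube, Set.mem_setOf_eq, Set.mem_pi, Set.mem_univ, true_implies]
  have hCube'Eq : Cube' = Set.pi Set.univ fun _ => Set.Icc (-c) c := by
    ext y; simp only [hCube', Set.mem_setOf_eq, Set.mem_pi, Set.mem_univ, true_implies]
  have hCubeM : MeasurableSet Cube := by
    rw [hCubeEq]; exact MeasurableSet.univ_pi fun _ => measurableSet_Icc
  have hCube'M : MeasurableSet Cube' := by
    rw [hCube'Eq]; exact MeasurableSet.univ_pi fun _ => measurableSet_Icc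
  have hSM : MeasurableSet S := by
    have h1 : S = Cube ∩ {w | |(∑ i, w i * z i) + b| ≤ τ} := rfl
    rw [h1]
    refine hCubeM.inter ?_
    have hmeas : Measurable fun w : Fin (n + 1) → ℝ => |(∑ i, w i * z i) + b| := by
      apply Measurable.abs
      apply Measurable.add _ measurable_const
      exact Finset.measurable_sum _ fun i _ => (measurable_pi_apply i).mul measurable_const
    exact hmeas measurableSet_Iic
  set e := MeasurableEquiv.piFinSuccAbove (fun _ : Fin (n + 1) => ℝ) ℓ with he
  have mp := volume_preserving_piFinSuccAbove (fun _ : Fin (n + 1) => ℝ) ℓ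
  set T : Set (ℝ × (Fin n → ℝ)) := e.symm ⁻¹' S with hT
  have hTM : MeasurableSet T := e.symm.measurable hSM
  have hST : S = e ⁻¹' T := by
    rw [hT, ← Set.preimage_comp]
    simp
  have hTmem : ∀ (x : ℝ) (y : Fin n → ℝ),
      ((x, y) ∈ T) ↔ (ℓ.insertNth x y ∈ S) := fun x y => Iff.rfl
  -- key slice bound
  have key : ∀ y : Fin n → ℝ,
      volume ((fun x => (x, y)) ⁻¹' T)
        ≤ Set.indicator Cube' (fun _ => ENNReal.ofReal (2 * τ / b)) y := by
    intro y
    by_cases hy : y ∈ Cube'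
    · rw [Set.indicator_of_mem hy]
      set R : ℝ := ∑ j, y j * z (ℓ.succAbove j) with hR
      have hsub : ((fun x => (x, y)) ⁻¹' T)
          ⊆ (· * z ℓ) ⁻¹' Set.Icc (-τ - (R + b)) (τ - (R + b)) := by
        intro x hx
        rw [Set.mem_preimage, hTmem] at hx
        obtain ⟨-, h2⟩ := hx
        rw [Fin.sum_univ_succAbove _ ℓ] at h2
        simp only [Fin.insertNth_apply_same, Fin.insertNth_apply_succAbove] at h2
        rw [abs_le] at h2
        simp only [Set.mem_preimage, Set.mem_Icc, ← hR] at *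
        constructor <;> linarith
      calc volume ((fun x => (x, y)) ⁻¹' T)
          ≤ volume ((· * z ℓ) ⁻¹' Set.Icc (-τ - (R + b)) (τ - (R + b))) :=
            measure_mono hsub
        _ = ENNReal.ofReal |(z ℓ)⁻¹| * volume (Set.Icc (-τ - (R + b)) (τ - (R + b))) :=
            Real.volume_preimage_mul_right hzℓ _
        _ ≤ ENNReal.ofReal (2 * τ / b) := by
            rw [Real.volume_Icc, ← ENNReal.ofReal_mul (abs_nonneg _)]
            apply ENNReal.ofReal_le_ofReal
            have h1 : τ - (R + b) - (-τ - (R + b)) = 2 * τ := by ring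
            rw [h1, abs_inv]
            rw [inv_mul_eq_div, div_le_div_iff₀ (abs_pos.mpr hzℓ) hb]
            nlinarith [abs_pos.mpr hzℓ]
    · rw [Set.indicator_of_notMem hy]
      have : ((fun x => (x, y)) ⁻¹' T) = ∅ := by
        ext x
        simp only [Set.mem_preimage, Set.mem_empty_iff_false, iff_false]
        intro hx
        rw [hTmem] at hx
        obtain ⟨h1, -⟩ := hx
        apply hy
        intro j
        have := h1 (ℓ.succAbove j)
        rwa [Fin.insertNth_apply_succAbove] at this
      rw [this, measure_empty]
  -- compute
  have hvol : volume S = ∫⁻ y, volume ((fun x => (x, y)) ⁻¹' T) := by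
    rw [hST, mp.measure_preimage hTM.nullMeasurableSet, Measure.volume_eq_prod,
      Measure.prod_apply_symm hTM]
  have hineq : volume S ≤ ENNReal.ofReal (2 * τ / b) * volume Cube' := by
    rw [hvol, ← lintegral_indicator_const hCube'M]
    exact lintegral_mono key
  -- volumes of cubes
  have hcpos : (0:ℝ) < c := by
    rw [hc]; positivity
  have hCubeVol : volume Cube = (ENNReal.ofReal (2 * c)) ^ (n + 1) := by
    rw [hCubeEq, volume_pi_pi]
    simp [Real.volume_Icc, two_mul]
  have hCube'Vol : volume Cube' = (ENNReal.ofReal (2 * c)) ^ n := by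
    rw [hCube'Eq, volume_pi_pi]
    simp [Real.volume_Icc, two_mul]
  refine hineq.trans ?_
  rw [hCubeVol, hCube'Vol, pow_succ', ← mul_assoc]
  gcongr ?_ * _
  rw [← ENNReal.ofReal_mul (by positivity)]
  apply ENNReal.ofReal_le_ofReal
  apply le_of_eq
  have hn1 : ((n + 1 : ℕ) : ℝ) ≠ 0 := by positivity
  rw [hc]
  field_simp
end
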